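/- Let λ̂_j > 0, let λ_1^⊥ ≥ ⋯ ≥ λ_{n−r}^⊥ and λ̂_1 ≥ ⋯ ≥ λ̂_n be real numbers satisfying the interlacing λ̂_{k+r} ≤ λ_k^⊥ ≤ λ̂_k for all 1 ≤ k ≤ n−r, and suppose λ̂_j > λ̂_k for all k ≥ r+1 and λ̂_j > λ_k^⊥ for all k. Then | Σ_{k=1}^{n−r} σ²/(λ̂_j − λ_k^⊥) − Σ_{k=r+1}^{n} σ²/(λ̂_j − λ̂_k) | ≤ Σ_{k=1}^{r} σ²/(λ̂_j − λ_k^⊥), for any σ² ≥ 0. -/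

import Mathlib

open Finset

/-- Comparison of reciprocal sums under interlacing. -/
theorem stmt_8 {n r m : ℕ} (hnm : m + r = n) (hrm : r ≤ m)
    (σ2 : ℝ) (hσ2 : 0 ≤ σ2)
    (lamj : ℝ) (hlamj : 0 < lamj)
    (lamhat : Fin n → ℝ) (lamperp : Fin m → ℝ)
    (hsort : Antitone lamhat) (hsort' : Antitone lamperp)
    (hinter : ∀ k : Fin m,
      lamhat ⟨(k : ℕ) + r, by have := k.isLt; omega⟩ ≤ lamperp k
      ∧ lamperp k ≤ lamhat ⟨(k : ℕ), by have := k.isLt; omega⟩)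
    (hgap1 : ∀ k : Fin n, r ≤ (k : ℕ) → lamhat k < lamj)
    (hgap2 : ∀ k : Fin m, lamperp k < lamj) :
    |(∑ k : Fin m, σ2 / (lamj - lamperp k))
        - ∑ k ∈ Finset.univ.filter (fun k : Fin n => r ≤ (k : ℕ)), σ2 / (lamj - lamhat k)|
      ≤ ∑ k ∈ Finset.univ.filter (fun k : Fin m => (k : ℕ) < r), σ2 / (lamj - lamperp k) := by
  set F : ℕ → ℝ := fun k => if h : k < m then σ2 / (lamj - lamperp ⟨k, h⟩) else 0 with hF
  set G : ℕ → ℝ := fun k => if h : k < n then σ2 / (lamj - lamhat ⟨k, h⟩) else 0 with hG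
  -- pointwise facts
  have hFnn : ∀ k, 0 ≤ F k := by
    intro k
    simp only [hF]
    split
    · exact div_nonneg hσ2 (by linarith [hgap2 ⟨k, ‹_›⟩])
    · exact le_refl 0
  have hGF : ∀ i, i < m → G (r + i) ≤ F i := by
    intro i hi
    have hrn : r + i < n := by omega
    simp only [hF, hG, dif_pos hi, dif_pos hrn]
    have h1 := (hinter ⟨i, hi⟩).1
    have h2 := hgap2 ⟨i, hi⟩
    have hle : lamhat ⟨r + i, hrn⟩ ≤ lamperp ⟨i, hi⟩ := by
      convert h1 using 2
      exact Fin.ext (by simp [Nat.add_comm])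
    apply div_le_div_of_nonneg_left hσ2 (by linarith) (by linarith)
  have hFG : ∀ i, r ≤ i → i < m → F i ≤ G i := by
    intro i hri hi
    have hin : i < n := by omega
    simp only [hF, hG, dif_pos hi, dif_pos hin]
    have h2 := (hinter ⟨i, hi⟩).2
    have hle : lamperp ⟨i, hi⟩ ≤ lamhat ⟨i, hin⟩ := by
      convert h2 using 2
    have hgap := hgap1 ⟨i, hin⟩ hri
    apply div_le_div_of_nonneg_left hσ2 (by linarith) (by linarith)
  have hGnn : ∀ k, r ≤ k → 0 ≤ G k := by
    intro k hk
    simp only [hG]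
    split
    · exact div_nonneg hσ2 (by linarith [hgap1 ⟨k, ‹_›⟩ hk])
    · exact le_refl 0
  -- rewrite the three sums
  have e1 : (∑ k : Fin m, σ2 / (lamj - lamperp k)) = ∑ k ∈ range m, F k := by
    rw [← Fin.sum_univ_eq_sum_range]
    apply Finset.sum_congr rfl
    intro k _
    simp [hF, k.isLt]
  have e2 : (∑ k ∈ Finset.univ.filter (fun k : Fin n => r ≤ (k : ℕ)), σ2 / (lamj - lamhat k))
      = ∑ k ∈ Finset.Ico r n, G k := by
    rw [Finset.sum_filter]
    have step : ∀ a : Fin n, (if r ≤ (a : ℕ) then σ2 / (lamj - lamhat a) else 0)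
        = (fun k : ℕ => if r ≤ k then G k else 0) (a : ℕ) := by
      intro a
      simp [hG, a.isLt]
    rw [Finset.sum_congr rfl (fun a _ => step a),
      Fin.sum_univ_eq_sum_range (fun k : ℕ => if r ≤ k then G k else 0) n,
      ← Finset.sum_filter,
      show Finset.filter (fun k => r ≤ k) (range n) = Finset.Ico r n by
        ext x
        simp only [Finset.mem_filter, Finset.mem_range, Finset.mem_Ico]
        omega]
  have e3 : (∑ k ∈ Finset.univ.filter (fun k : Fin m => (k : ℕ) < r), σ2 / (lamj - lamperp k))
      = ∑ k ∈ range r, F k := by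
    rw [Finset.sum_filter,
      show (range r) = Finset.filter (fun k => k < r) (range m) by
        ext x; simp [Finset.mem_filter]; omega,
      Finset.sum_filter, ← Fin.sum_univ_eq_sum_range]
    apply Finset.sum_congr rfl
    intro k _
    simp [hF, k.isLt]
  rw [e1, e2, e3]
  have hico : ∑ k ∈ Finset.Ico r n, G k = ∑ i ∈ range m, G (r + i) := by
    rw [Finset.sum_Ico_eq_sum_range, show n - r = m by omega]
  rw [hico]
  rw [abs_le]
  constructor
  · -- lower: -(∑ range r F) ≤ ∑F - ∑G∘shift, since ∑G∘shift ≤ ∑F and 0 ≤ ∑ range r F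
    have h1 : ∑ i ∈ range m, G (r + i) ≤ ∑ k ∈ range m, F k :=
      Finset.sum_le_sum fun i hi => hGF i (Finset.mem_range.mp hi)
    have h2 : 0 ≤ ∑ k ∈ range r, F k := Finset.sum_nonneg fun k _ => hFnn k
    linarith
  · -- upper
    have hsplit : ∑ k ∈ range m, F k = ∑ k ∈ range r, F k + ∑ k ∈ Finset.Ico r m, F k := by
      rw [Finset.range_eq_Ico, ← Finset.sum_Ico_consecutive F (Nat.zero_le r) hrm, Finset.range_eq_Ico]
    have h1 : ∑ k ∈ Finset.Ico r m, F k ≤ ∑ k ∈ Finset.Ico r m, G k :=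
      Finset.sum_le_sum fun i hi => by
        have := Finset.mem_Ico.mp hi
        exact hFG i this.1 this.2
    have h2 : ∑ k ∈ Finset.Ico r m, G k ≤ ∑ k ∈ Finset.Ico r n, G k := by
      apply Finset.sum_le_sum_of_subset_of_nonneg
      · apply Finset.Ico_subset_Ico_right; omega
      · intro i hi _
        exact hGnn i (Finset.mem_Ico.mp hi).1
    rw [hico] at h2
    linarith
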